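/- arXiv:1409.4632 — 2 statements merged into one kernel-verified Lean document; each statement's English description precedes it below -/
import Mathlib

section
/- Every 4-connected graph on at least six vertices has a K_{2,4} minor. -/
namespace K24Paper

open SimpleGraph

/-- `H` is a minor of `G`: branch sets indexed by vertices of `H`, pairwise disjoint,
each inducing a connected subgraph of `G`, with every edge of `H` realized by an edge
of `G` between the corresponding branch sets. -/
def IsMinor {W V : Type*} (H : SimpleGraph W) (G : SimpleGraph V) : Prop :=
  ∃ B : W → Set V,
    (∀ w, (G.induce (B w)).Connected) ∧
    (∀ w₁ w₂, w₁ ≠ w₂ → Disjoint (B w₁) (B w₂)) ∧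
    (∀ w₁ w₂, H.Adj w₁ w₂ → ∃ v₁ ∈ B w₁, ∃ v₂ ∈ B w₂, G.Adj v₁ v₂)

/-- `G` is `H`-minor-free. -/
def MinorFree {W V : Type*} (H : SimpleGraph W) (G : SimpleGraph V) : Prop :=
  ¬ IsMinor H G

/-- The complete bipartite graph `K_{2,4}`. -/
def K24 : SimpleGraph (Fin 2 ⊕ Fin 4) := completeBipartiteGraph (Fin 2) (Fin 4)

/-- `G` is `k`-connected: more than `k` vertices, and removing fewer than `k`
vertices leaves a connected graph. -/
def KConnected {V : Type*} (k : ℕ) (G : SimpleGraph V) : Prop :=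
  k < Nat.card V ∧ ∀ S : Set V, S.ncard < k → (G.induce Sᶜ).Connected

/-- The graph `G_{n,r,s}` (with the plus edge if `plus = true`), on vertices
`0, …, n-1` corresponding to `v_1, …, v_n`:  the spine `v_1 v_2 ⋯ v_n`, the edges
`v_1 v_{n-i}` for `1 ≤ i ≤ r`, the edges `v_n v_{1+j}` for `1 ≤ j ≤ s`, and
(if `plus`) the plus edge `v_1 v_n`. -/
def Gnrs (n r s : ℕ) (plus : Bool) : SimpleGraph (Fin n) :=
  SimpleGraph.fromRel (fun a b =>
    b.val = a.val + 1 ∨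
    (a.val = 0 ∧ n - 1 - r ≤ b.val ∧ b.val ≤ n - 2) ∨
    (b.val = n - 1 ∧ 1 ≤ a.val ∧ a.val ≤ s) ∨
    (plus = true ∧ a.val = 0 ∧ b.val = n - 1))

/-- The parameter conditions describing membership in the class `𝒢`. -/
def Gparams (n r s : ℕ) (plus : Bool) : Prop :=
  (plus = true ∧ 4 ≤ n ∧ ((r = 1 ∧ s = n - 3) ∨ (r = n - 3 ∧ s = 1))) ∨
  (5 ≤ n ∧ 2 ≤ r ∧ r ≤ n - 3 ∧ 2 ≤ s ∧ s ≤ n - 3 ∧ (r + s = n - 2 ∨ r + s = n - 1))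

/-- `G` belongs to `𝒢̃`, i.e. `G` is isomorphic to a graph of the class `𝒢`. -/
def InGtilde {V : Type*} (G : SimpleGraph V) : Prop :=
  ∃ n r s plus, Gparams n r s plus ∧ Nonempty (G ≃g Gnrs n r s plus)

/-- The graph obtained from `G` by subdividing every edge in `F` once:
new vertices are the members of `F`. -/
def SubdivideEdges {V : Type*} (G : SimpleGraph V) (F : Set (Sym2 V)) :
    SimpleGraph (V ⊕ F) :=
  SimpleGraph.fromRel (fun a b =>
    match a, b with
    | Sum.inl u, Sum.inl v => G.Adj u v ∧ s(u, v) ∉ F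
    | Sum.inl u, Sum.inr e => u ∈ (e : Sym2 V)
    | Sum.inr e, Sum.inl u => u ∈ (e : Sym2 V)
    | Sum.inr _, Sum.inr _ => False)

/-- A set `F` of edges of a graph `G` is subdividable if subdividing every edge
of `F` once yields a `K_{2,4}`-minor-free graph. -/
def Subdividable {V : Type*} (G : SimpleGraph V) (F : Set (Sym2 V)) : Prop :=
  F ⊆ G.edgeSet ∧ MinorFree K24 (SubdivideEdges G F)

/-- `F` is a maximal subdividable set of edges of `G`. -/
def MaxSubdividable {V : Type*} (G : SimpleGraph V) (F : Set (Sym2 V)) : Prop :=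
  Subdividable G F ∧ ∀ F', Subdividable G F' → F ⊆ F' → F' = F

/-- `l` lists vertices along a path of `G` (consecutive entries adjacent, no repeats)
such that no two edges of `G` cross with respect to this ordering. -/
def OuterListing {U : Type*} (G : SimpleGraph U) (l : List U) : Prop :=
  l.Nodup ∧ l.Chain' G.Adj ∧
  ∀ (i k j m : ℕ) (h1 : i < k) (h2 : k < j) (h3 : j < m) (hm : m < l.length),
    ¬(G.Adj (l.get ⟨i, by omega⟩) (l.get ⟨j, by omega⟩) ∧
      G.Adj (l.get ⟨k, by omega⟩) (l.get ⟨m, by omega⟩))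

/-- The graph `G` restricted to the vertex set `A` is `xy`-outerplanar: it has a
hamilton `xy`-path (listing exactly the vertices of `A`) such that no two edges
cross with respect to it. -/
def XYOuterplanar {U : Type*} (G : SimpleGraph U) (A : Set U) (x y : U) : Prop :=
  ∃ l : List U, (∀ v, v ∈ l ↔ v ∈ A) ∧ l.head? = some x ∧ l.getLast? = some y ∧
    OuterListing G l

/-- A block: a connected graph with no cutvertex. -/
def IsBlock {V : Type*} (G : SimpleGraph V) : Prop :=
  G.Connected ∧ ∀ v : V, (G.induce {u | u ≠ v}).Preconnected

/-- `G + xy`: the graph `G` with the edge `xy` added (if not already present). -/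
def AddEdge {U : Type*} (G : SimpleGraph U) (x y : U) : SimpleGraph U :=
  G ⊔ SimpleGraph.fromRel (fun a b => a = x ∧ b = y)

/-- A standard `K_{2,t}` minor `(R₁, R₂; S)` of `G`. -/
def StdK2tMinor {V : Type*} (G : SimpleGraph V) (t : ℕ) (R₁ R₂ S : Set V) : Prop :=
  Disjoint R₁ R₂ ∧ Disjoint (R₁ ∪ R₂) S ∧
  (G.induce R₁).Connected ∧ (G.induce R₂).Connected ∧
  S.Finite ∧ S.ncard = t ∧
  ∀ v ∈ S, (∃ w ∈ R₁, G.Adj v w) ∧ (∃ w ∈ R₂, G.Adj v w)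

/-- `K_{3,3}` with parts `{0,1,2}` and `{3,4,5}`. -/
def K33 : SimpleGraph (Fin 6) :=
  SimpleGraph.fromRel (fun a b => a.val < 3 ∧ 3 ≤ b.val)

/-- The graph `A = K_{3,3} + v₂v₃`. -/
def GA : SimpleGraph (Fin 6) := AddEdge K33 1 2

/-- The graph `A⁺ = K_{3,3} + v₂v₃ + v₅v₆`. -/
def GAplus : SimpleGraph (Fin 6) := AddEdge GA 4 5

/-- The graph `B`, on vertices `h, r₁, r₂, r₃, r₄, g₁, g₂ = 0, …, 6`. -/
def GB : SimpleGraph (Fin 7) :=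
  SimpleGraph.fromRel (fun a b => (a.val, b.val) ∈
    [(0,3),(0,4),(1,4),(2,3),(3,4),(5,0),(5,1),(5,2),(6,0),(6,1),(6,2)])

/-- The graph `B⁺ = B + g₁g₂`. -/
def GBplus : SimpleGraph (Fin 7) := AddEdge GB 5 6

/-- The graph `C⁺`, on vertices `v₁, …, v₈ = 0, …, 7`. -/
def GCplus : SimpleGraph (Fin 8) :=
  SimpleGraph.fromRel (fun a b => (a.val, b.val) ∈
    [(0,1),(0,2),(1,2),(3,4),(3,5),(3,6),(3,7),(4,5),(4,6),(4,7),(2,5),(1,7),(0,6)])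

/-- The graph `C = C⁺ ∖ v₄v₅`. -/
def GC : SimpleGraph (Fin 8) := GCplus.deleteEdges {s(3, 4)}

/-- The graph `D`, on vertices `t₁, t₂, t₃, d₁, d₂, d₃, g = 0, …, 6`. -/
def GD : SimpleGraph (Fin 7) :=
  SimpleGraph.fromRel (fun a b => (a.val, b.val) ∈
    [(0,1),(0,2),(1,2),(3,4),(3,5),(4,5),(0,3),(1,4),(2,5),(6,0),(6,1),(6,2)])

/-- The complete graph `K₅`. -/
def GK5 : SimpleGraph (Fin 5) := completeGraph (Fin 5)

end K24Paper

namespace K24Paper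


section MengerDevelopment
open SimpleGraph
variable {V : Type*}

def WalkIn (G : SimpleGraph V) (C : Set V) (x y : V) : Prop :=
  ∃ p : G.Walk x y, ∀ v ∈ p.support, v ∈ C

namespace WalkIn

lemma refl {G : SimpleGraph V} {C : Set V} {x : V} (hx : x ∈ C) : WalkIn G C x x :=
  ⟨Walk.nil, by simp [hx]⟩

lemma symm {G : SimpleGraph V} {C : Set V} {x y : V} (h : WalkIn G C x y) : WalkIn G C y x := by
  obtain ⟨p, hp⟩ := h
  exact ⟨p.reverse, by simpa [Walk.support_reverse] using hp⟩

lemma trans {G : SimpleGraph V} {C : Set V} {x y z : V} (h : WalkIn G C x y)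
    (h' : WalkIn G C y z) : WalkIn G C x z := by
  obtain ⟨p, hp⟩ := h; obtain ⟨q, hq⟩ := h'
  refine ⟨p.append q, ?_⟩
  intro v hv
  rw [Walk.mem_support_append_iff] at hv
  exact hv.elim (hp v) (hq v)

lemma mono {G : SimpleGraph V} {C D : Set V} {x y : V} (hCD : C ⊆ D) (h : WalkIn G C x y) :
    WalkIn G D x y := by
  obtain ⟨p, hp⟩ := h; exact ⟨p, fun v hv => hCD (hp v hv)⟩

lemma monoGraph {G G' : SimpleGraph V} {C : Set V} {x y : V} (hGG : G ≤ G')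
    (h : WalkIn G C x y) : WalkIn G' C x y := by
  obtain ⟨p, hp⟩ := h
  refine ⟨p.mapLe hGG, ?_⟩
  intro v hv
  rw [Walk.mapLe, Walk.support_map] at hv
  obtain ⟨a, ha, rfl⟩ := List.mem_map.mp hv
  exact hp a ha

lemma of_adj {G : SimpleGraph V} {C : Set V} {x y : V} (h : G.Adj x y) (hx : x ∈ C)
    (hy : y ∈ C) : WalkIn G C x y :=
  ⟨Walk.cons h Walk.nil, by simp [hx, hy]⟩

lemma start_mem {G : SimpleGraph V} {C : Set V} {x y : V} (h : WalkIn G C x y) : x ∈ C := by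
  obtain ⟨p, hp⟩ := h; exact hp x p.start_mem_support

lemma end_mem {G : SimpleGraph V} {C : Set V} {x y : V} (h : WalkIn G C x y) : y ∈ C := by
  obtain ⟨p, hp⟩ := h; exact hp y p.end_mem_support

end WalkIn

/-- First hit of a set `Z` along a walk: a prefix-like walk `q` to some `w ∈ Z` such that
every earlier vertex is outside `Z` and is reachable from `u` avoiding `Z` entirely. -/
lemma exists_first_hit {G : SimpleGraph V} (Z : Set V) :
    ∀ {u t : V} (p : G.Walk u t), (∃ w ∈ p.support, w ∈ Z) →
    ∃ w ∈ Z, ∃ q : G.Walk u w, (∀ v ∈ q.support, v ∈ p.support) ∧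
      (∀ v ∈ q.support, v ≠ w → v ∉ Z ∧ ∃ r : G.Walk u v,
        (∀ z ∈ r.support, z ∈ q.support) ∧ ∀ z ∈ r.support, z ∉ Z) := by
  intro u t p
  induction p with
  | nil =>
    intro h
    obtain ⟨w, hw, hwZ⟩ := h
    simp only [Walk.support_nil, List.mem_singleton] at hw
    subst hw
    exact ⟨w, hwZ, Walk.nil, by simp, by simp⟩
  | @cons u c t h p ih =>
    intro hex
    by_cases hu : u ∈ Z
    · exact ⟨u, hu, Walk.nil, by simp, by simp⟩
    · have hex' : ∃ w ∈ p.support, w ∈ Z := by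
        obtain ⟨w, hw, hwZ⟩ := hex
        rw [Walk.support_cons, List.mem_cons] at hw
        rcases hw with rfl | hw
        · exact absurd hwZ hu
        · exact ⟨w, hw, hwZ⟩
      obtain ⟨w, hwZ, q, hq1, hq2⟩ := ih hex'
      refine ⟨w, hwZ, Walk.cons h q, ?_, ?_⟩
      · intro v hv
        rw [Walk.support_cons, List.mem_cons] at hv ⊢
        exact hv.imp id (fun hv' => hq1 v hv')
      · intro v hv hvw
        rw [Walk.support_cons, List.mem_cons] at hv
        rcases hv with rfl | hv
        · exact ⟨hu, Walk.nil, by simp, by simp [hu]⟩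
        · obtain ⟨hvZ, r, hr1, hr2⟩ := hq2 v hv hvw
          refine ⟨hvZ, Walk.cons h r, ?_, ?_⟩
          · intro z hz
            rw [Walk.support_cons, List.mem_cons] at hz ⊢
            exact hz.imp id (hr1 z)
          · intro z hz
            rw [Walk.support_cons, List.mem_cons] at hz
            rcases hz with rfl | hz
            · exact hu
            · exact hr2 z hz

lemma connected_induce_of_walkIn {G : SimpleGraph V} {C : Set V} (hne : C.Nonempty)
    (h : ∀ x ∈ C, ∀ y ∈ C, WalkIn G C x y) : (G.induce C).Connected := by
  have key : ∀ (u v : V) (p : G.Walk u v), (∀ w ∈ p.support, w ∈ C) →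
      ∀ (hu : u ∈ C) (hv : v ∈ C), (G.induce C).Reachable ⟨u, hu⟩ ⟨v, hv⟩ := by
    intro u v p
    induction p with
    | nil => intro _ hu hv; rfl
    | @cons u c t hadj p ih =>
      intro hs hu hv
      have hc : c ∈ C := hs c (by simp [Walk.support_cons])
      have h1 : (G.induce C).Adj ⟨u, hu⟩ ⟨c, hc⟩ := hadj
      exact (h1.reachable).trans (ih (fun w hw => hs w (by simp [Walk.support_cons, hw])) hc hv)
  rw [connected_iff]
  constructor
  · rintro ⟨x, hx⟩ ⟨y, hy⟩
    obtain ⟨p, hp⟩ := h x hx y hy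
    exact key x y p hp hx hy
  · exact ⟨⟨hne.choose, hne.choose_spec⟩⟩

lemma singleton_induce_connected (G : SimpleGraph V) (a : V) :
    (G.induce {a}).Connected := by
  rw [connected_iff]
  refine ⟨?_, ⟨⟨a, rfl⟩⟩⟩
  rintro ⟨x, hx⟩ ⟨y, hy⟩
  simp only [Set.mem_singleton_iff] at hx hy
  subst hx; subst hy
  rfl

lemma walk_of_induce_reachable {G : SimpleGraph V} {C : Set V} {a b : V} (ha : a ∈ C) (hb : b ∈ C)
    (h : (G.induce C).Reachable ⟨a, ha⟩ ⟨b, hb⟩) : WalkIn G C a b := by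
  obtain ⟨p⟩ := h
  have key : ∀ (x y : C) (q : (G.induce C).Walk x y), WalkIn G C x.1 y.1 := by
    intro x y q
    induction q with
    | nil => exact ⟨Walk.nil, by simp [x.2]⟩
    | @cons x c t hadj q ih =>
      obtain ⟨r, hr⟩ := ih
      refine ⟨Walk.cons (by exact hadj) r, ?_⟩
      intro v hv
      change v ∈ (x : V) :: r.support at hv
      rw [List.mem_cons] at hv
      rcases hv with rfl | hv
      · exact x.2
      · exact hr v hv
  exact key ⟨a, ha⟩ ⟨b, hb⟩ p

lemma eq_of_walk_edgeless {G : SimpleGraph V} (hE : G.edgeSet = ∅) {u v : V}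
    (p : G.Walk u v) : u = v := by
  cases p with
  | nil => rfl
  | cons h p => exact absurd (G.mem_edgeSet.mpr h) (by simp [hE])

/-- Strip the two endpoints off a nontrivial path. -/
lemma strip_path {G : SimpleGraph V} {a b : V} (p : G.Walk a b) (hp : p.IsPath)
    (hne : a ≠ b) (hnadj : ¬ G.Adj a b) :
    ∃ u w, G.Adj a u ∧ G.Adj w b ∧ ∃ q : G.Walk u w,
      (∀ v ∈ q.support, v ∈ p.support) ∧ a ∉ q.support ∧ b ∉ q.support := by
  cases p with
  | nil => exact absurd rfl hne
  | @cons a u b hadj p1 =>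
    have hp1 : p1.IsPath := hp.of_cons
    have hanot : a ∉ p1.support := by
      have := hp.support_nodup
      rw [Walk.support_cons] at this
      exact (List.nodup_cons.mp this).1
    have hub : u ≠ b := by rintro rfl; exact hnadj hadj
    have hp1r : p1.reverse.IsPath := hp1.reverse
    rcases hrev : p1.reverse with _ | ⟨hadj2, p2⟩
    · exact absurd rfl hub
    rename_i w
    have hsupp : p1.support = (p2.reverse.support) ++ [b] := by
      have h1 : p1.reverse.support = b :: p2.support := by rw [hrev, Walk.support_cons]
      have := congrArg List.reverse h1
      rw [← Walk.support_reverse, Walk.reverse_reverse] at this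
      rw [this, Walk.support_reverse]
      simp
    have hbnot : b ∉ p2.support := by
      have := hp1r.support_nodup
      rw [hrev, Walk.support_cons] at this
      exact (List.nodup_cons.mp this).1
    refine ⟨u, w, hadj, hadj2.symm, p2.reverse, ?_, ?_, ?_⟩
    · intro v hv
      rw [Walk.support_cons, List.mem_cons, hsupp]
      right
      exact List.mem_append_left _ hv
    · intro hmem
      exact hanot (by rw [hsupp]; exact List.mem_append_left _ hmem)
    · intro hmem
      rw [Walk.support_reverse, List.mem_reverse] at hmem
      exact hbnot hmem

def JoinedOff (G : SimpleGraph V) (A B S : Set V) : Prop :=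
  ∃ u ∈ A, ∃ v ∈ B, ∃ p : G.Walk u v, ∀ w ∈ p.support, w ∉ S

def IsConnector (G : SimpleGraph V) (A B C : Set V) : Prop :=
  (C ∩ A).Nonempty ∧ (C ∩ B).Nonempty ∧ ∀ x ∈ C, ∀ y ∈ C, WalkIn G C x y

lemma IsConnector.monoGraph {G G' : SimpleGraph V} {A B C : Set V} (h : G ≤ G')
    (hc : IsConnector G A B C) : IsConnector G' A B C :=
  ⟨hc.1, hc.2.1, fun x hx y hy => (hc.2.2 x hx y hy).monoGraph h⟩

lemma fan_of_edgeless [Fintype V] {G : SimpleGraph V} {A B : Set V} {k : ℕ}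
    (hE : G.edgeSet = ∅)
    (hsep : ∀ S : Finset V, S.card < k → JoinedOff G A B ↑S) :
    ∃ C : Fin k → Set V, (∀ i, IsConnector G A B (C i)) ∧
      ∀ i j, i ≠ j → Disjoint (C i) (C j) := by
  classical
  have hAB : k ≤ (Set.toFinset (A ∩ B)).card := by
    by_contra hlt
    push_neg at hlt
    obtain ⟨u, hu, v, hv, p, hp⟩ := hsep _ hlt
    cases eq_of_walk_edgeless hE p
    exact hp u p.start_mem_support (by simp [hu, hv])
  obtain ⟨t, hts, htc⟩ := Finset.exists_subset_card_eq hAB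
  set f : Fin k → V := fun i => (t.equivFin.symm (Fin.cast htc.symm i) : V) with hf
  have hfinj : Function.Injective f := fun i j hij => by
    have h2 := t.equivFin.symm.injective (Subtype.ext hij)
    simpa [Fin.ext_iff] using h2
  have hfAB : ∀ i, f i ∈ A ∩ B := by
    intro i
    have := hts (t.equivFin.symm (Fin.cast htc.symm i)).2
    rwa [Set.mem_toFinset] at this
  refine ⟨fun i => {f i}, fun i => ⟨⟨f i, rfl, (hfAB i).1⟩, ⟨f i, rfl, (hfAB i).2⟩, ?_⟩, ?_⟩
  · rintro x rfl y rfl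
    exact WalkIn.refl rfl
  · intro i j hij
    rw [Set.disjoint_singleton_left, Set.mem_singleton_iff]
    exact fun h => hij (hfinj h)

lemma walk_toDeleteEdge {G : SimpleGraph V} {x y u v : V} (p : G.Walk u v)
    (h : x ∉ p.support ∨ y ∉ p.support) :
    ∃ q : (G.deleteEdges {s(x,y)}).Walk u v, q.support = p.support := by
  refine ⟨p.toDeleteEdges _ ?_, Walk.support_transfer _ _⟩
  intro e he
  simp only [Set.mem_singleton_iff]
  intro hexy
  subst hexy
  exact h.elim (fun hx => hx (p.fst_mem_support_of_mem_edges he))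
    (fun hy => hy (p.snd_mem_support_of_mem_edges he))

/-- Vertices reachable from `A` avoiding `S`. -/
def sideA (G : SimpleGraph V) (A S : Set V) : Set V :=
  {v | ∃ u ∈ A, ∃ p : G.Walk u v, ∀ w ∈ p.support, w ∉ S}

/-- Vertices from which `B` can be reached avoiding `S`. -/
def sideB (G : SimpleGraph V) (B S : Set V) : Set V :=
  {v | ∃ w ∈ B, ∃ p : G.Walk v w, ∀ z ∈ p.support, z ∉ S}

lemma sideA_propagate {G : SimpleGraph V} {A S : Set V} {x y : V}
    (hx : x ∈ sideA (G.deleteEdges {s(x,y)}) A S)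
    (hy : y ∈ sideA (G.deleteEdges {s(x,y)}) A S) :
    ∀ {u v : V} (p : G.Walk u v), u ∈ sideA (G.deleteEdges {s(x,y)}) A S →
      (∀ w ∈ p.support, w ∉ S) → v ∈ sideA (G.deleteEdges {s(x,y)}) A S := by
  intro u v p
  induction p with
  | nil => exact fun hu _ => hu
  | @cons u c t hadj p ih =>
    intro hu hsup
    have hc : c ∈ sideA (G.deleteEdges {s(x,y)}) A S := by
      by_cases he : s(u, c) = s(x, y)
      · rw [Sym2.eq_iff] at he
        rcases he with ⟨rfl, rfl⟩ | ⟨rfl, rfl⟩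
        · exact hy
        · exact hx
      · obtain ⟨a, ha, r, hr⟩ := hu
        refine ⟨a, ha, r.concat (by rw [SimpleGraph.deleteEdges_adj]; exact ⟨hadj, by simpa using he⟩), ?_⟩
        intro w hw
        rw [Walk.support_concat, List.mem_append] at hw
        rcases hw with hw | hw
        · exact hr w hw
        · rw [List.mem_singleton] at hw
          subst hw
          exact hsup w (by simp [Walk.support_cons])
    exact ih hc (fun w hw => hsup w (by simp [Walk.support_cons, hw]))

lemma fan_step [Fintype V] {n k : ℕ} {G : SimpleGraph V} {A B : Set V} {x y : V}
    (ih : ∀ (G : SimpleGraph V) (A B : Set V), G.edgeSet.ncard ≤ n →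
      (∀ S : Finset V, S.card < k → JoinedOff G A B ↑S) →
      ∃ C : Fin k → Set V, (∀ i, IsConnector G A B (C i)) ∧ ∀ i j, i ≠ j → Disjoint (C i) (C j))
    (hadj : G.Adj x y)
    (hcard : (G.deleteEdges {s(x,y)}).edgeSet.ncard ≤ n)
    (hsep : ∀ S : Finset V, S.card < k → JoinedOff G A B ↑S)
    (S₀ : Finset V) (hS₀k : S₀.card < k)
    (hnj : ¬ JoinedOff (G.deleteEdges {s(x,y)}) A B ↑S₀)
    (hxX : x ∈ sideA (G.deleteEdges {s(x,y)}) A ↑S₀)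
    (hyX : y ∉ sideA (G.deleteEdges {s(x,y)}) A ↑S₀) :
    ∃ C : Fin k → Set V, (∀ i, IsConnector G A B (C i)) ∧
      ∀ i j, i ≠ j → Disjoint (C i) (C j) := by
  classical
  set G' := G.deleteEdges {s(x,y)} with hG'def
  have hG'le : G' ≤ G := G.deleteEdges_le _
  have hxyne : x ≠ y := hadj.ne
  have hsubx : (↑S₀ : Set V) ⊆ ↑(insert x S₀) := by
    intro z hz; simp only [Finset.coe_insert, Set.mem_insert_iff]; right; exact hz
  have hsuby : (↑S₀ : Set V) ⊆ ↑(insert y S₀) := by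
    intro z hz; simp only [Finset.coe_insert, Set.mem_insert_iff]; right; exact hz
  have hXY' : ∀ v, v ∈ sideA G' A ↑S₀ → v ∈ sideB G' B ↑S₀ → False := by
    rintro v ⟨a, ha, r, hr⟩ ⟨b, hb, r', hr'⟩
    refine hnj ⟨a, ha, b, hb, r.append r', ?_⟩
    intro z hz
    rw [Walk.mem_support_append_iff] at hz
    exact hz.elim (hr z) (hr' z)
  have hxY' : x ∉ sideB G' B ↑S₀ := fun h => hXY' x hxX h
  have hyY' : y ∈ sideB G' B ↑S₀ := by
    obtain ⟨u0, hu0, v0, hv0, p0, hp0⟩ := hsep S₀ hS₀k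
    have hhitxy : ∃ w ∈ p0.reverse.support, w ∈ ({x, y} : Set V) := by
      by_contra hno
      push_neg at hno
      have hxs : x ∉ p0.support := by
        intro hxs
        exact hno x (by rw [Walk.support_reverse, List.mem_reverse]; exact hxs) (by simp)
      obtain ⟨q, hq⟩ := walk_toDeleteEdge p0 (Or.inl hxs)
      exact hnj ⟨u0, hu0, v0, hv0, q, by rw [hq]; exact hp0⟩
    obtain ⟨w, hwZ, q, hq1, hq2⟩ := exists_first_hit {x, y} p0.reverse hhitxy
    simp only [Set.mem_insert_iff, Set.mem_singleton_iff] at hwZ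
    have hqfree : x ∉ q.support ∨ y ∉ q.support := by
      rcases hwZ with rfl | rfl
      · right; intro hyq; exact (hq2 y hyq (Ne.symm hxyne)).1 (by simp)
      · left; intro hxq; exact (hq2 x hxq hxyne).1 (by simp)
    obtain ⟨q', hq'⟩ := walk_toDeleteEdge q hqfree
    have hwY : w ∈ sideB G' B ↑S₀ := by
      refine ⟨v0, hv0, q'.reverse, ?_⟩
      intro z hz
      rw [Walk.support_reverse, List.mem_reverse, hq'] at hz
      have hz2 := hq1 z hz
      rw [Walk.support_reverse, List.mem_reverse] at hz2
      exact hp0 z hz2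
    rcases hwZ with rfl | rfl
    · exact absurd hwY hxY'
    · exact hwY
  have hTxsep : ¬ JoinedOff G A B ↑(insert x S₀) := by
    rintro ⟨u, hu, v, hv, p, hp⟩
    have hxp : x ∉ p.support := fun hxs => hp x hxs (by simp)
    obtain ⟨q, hq⟩ := walk_toDeleteEdge p (Or.inl hxp)
    refine hnj ⟨u, hu, v, hv, q, ?_⟩
    intro z hz
    rw [hq] at hz
    exact fun hzS => hp z hz (hsubx hzS)
  have hTysep : ¬ JoinedOff G A B ↑(insert y S₀) := by
    rintro ⟨u, hu, v, hv, p, hp⟩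
    have hyp : y ∉ p.support := fun hys => hp y hys (by simp)
    obtain ⟨q, hq⟩ := walk_toDeleteEdge p (Or.inr hyp)
    refine hnj ⟨u, hu, v, hv, q, ?_⟩
    intro z hz
    rw [hq] at hz
    exact fun hzS => hp z hz (hsuby hzS)
  have hxS₀ : x ∉ S₀ := by
    intro hxmem
    have h1 : (insert x S₀).card < k := by rwa [Finset.insert_eq_self.mpr hxmem]
    exact hTxsep (hsep _ h1)
  have hyS₀ : y ∉ S₀ := by
    intro hymem
    have h1 : (insert y S₀).card < k := by rwa [Finset.insert_eq_self.mpr hymem]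
    exact hTysep (hsep _ h1)
  have hTxcard : (insert x S₀).card = k := by
    have h1 : (insert x S₀).card = S₀.card + 1 := Finset.card_insert_of_notMem hxS₀
    have h2 : ¬ (insert x S₀).card < k := fun h => hTxsep (hsep _ h)
    omega
  have hTycard : (insert y S₀).card = k := by
    have h1 : (insert y S₀).card = S₀.card + 1 := Finset.card_insert_of_notMem hyS₀
    have h2 : ¬ (insert y S₀).card < k := fun h => hTysep (hsep _ h)
    omega
  have hsubZx : (↑(insert x S₀) : Set V) ⊆ ↑S₀ ∪ {x, y} := by
    intro z hz
    simp only [Finset.coe_insert, Set.mem_insert_iff, Finset.mem_coe] at hz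
    rcases hz with rfl | hz
    · exact Set.mem_union_right _ (by simp)
    · exact Set.mem_union_left _ hz
  have hsubZy : (↑(insert y S₀) : Set V) ⊆ ↑S₀ ∪ {x, y} := by
    intro z hz
    simp only [Finset.coe_insert, Set.mem_insert_iff, Finset.mem_coe] at hz
    rcases hz with rfl | hz
    · exact Set.mem_union_right _ (by simp)
    · exact Set.mem_union_left _ hz
  have claimP : ∀ S' : Finset V, S'.card < k → JoinedOff G' A ↑(insert x S₀) ↑S' := by
    intro S' hS'
    obtain ⟨u, hu, v, hv, p, hp⟩ := hsep S' hS'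
    have hhit : ∃ w ∈ p.support, w ∈ (↑S₀ ∪ {x, y} : Set V) := by
      by_contra hno
      push_neg at hno
      exact hTxsep ⟨u, hu, v, hv, p, fun z hz hzm => hno z hz (hsubZx hzm)⟩
    obtain ⟨w, hwZ, q, hq1, hq2⟩ := exists_first_hit (↑S₀ ∪ {x, y}) p hhit
    have hqfree : x ∉ q.support ∨ y ∉ q.support := by
      by_cases hxw : x = w
      · right
        intro hyq
        exact (hq2 y hyq (fun h => hxyne (hxw.trans h.symm))).1
          (Set.mem_union_right _ (by simp))
      · left
        intro hxq
        exact (hq2 x hxq hxw).1 (Set.mem_union_right _ (by simp))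
    obtain ⟨q', hq'⟩ := walk_toDeleteEdge q hqfree
    have hwcase : w ∈ (↑(insert x S₀) : Set V) ∨ w = y := by
      rcases hwZ with hw | hw
      · exact Or.inl (hsubx hw)
      · simp only [Set.mem_insert_iff, Set.mem_singleton_iff] at hw
        rcases hw with rfl | rfl
        · exact Or.inl (by simp)
        · exact Or.inr rfl
    rcases hwcase with hw | heq
    · exact ⟨u, hu, w, hw, q', by rw [hq']; intro z hz; exact hp z (hq1 z hz)⟩
    · exfalso
      apply hyX
      have hwA : w ∈ sideA G' A ↑S₀ := by
        refine ⟨u, hu, q', ?_⟩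
        intro z hz
        rw [hq'] at hz
        by_cases hzw : z = w
        · subst hzw
          rw [heq]
          exact fun h => hyS₀ (by exact_mod_cast h)
        · exact fun h => (hq2 z hz hzw).1 (Set.mem_union_left _ h)
      rwa [heq] at hwA
  have claimQ : ∀ S' : Finset V, S'.card < k → JoinedOff G' ↑(insert y S₀) B ↑S' := by
    intro S' hS'
    obtain ⟨u, hu, v, hv, p, hp⟩ := hsep S' hS'
    have hhit : ∃ w ∈ p.reverse.support, w ∈ (↑S₀ ∪ {x, y} : Set V) := by
      by_contra hno
      push_neg at hno
      refine hTysep ⟨u, hu, v, hv, p, fun z hz hzm => ?_⟩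
      exact hno z (by rw [Walk.support_reverse, List.mem_reverse]; exact hz) (hsubZy hzm)
    obtain ⟨w, hwZ, q, hq1, hq2⟩ := exists_first_hit (↑S₀ ∪ {x, y}) p.reverse hhit
    have hqfree : x ∉ q.support ∨ y ∉ q.support := by
      by_cases hxw : x = w
      · right
        intro hyq
        exact (hq2 y hyq (fun h => hxyne (hxw.trans h.symm))).1
          (Set.mem_union_right _ (by simp))
      · left
        intro hxq
        exact (hq2 x hxq hxw).1 (Set.mem_union_right _ (by simp))
    obtain ⟨q', hq'⟩ := walk_toDeleteEdge q hqfree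
    have hsupp : ∀ z ∈ q.support, z ∈ p.support := by
      intro z hz
      have := hq1 z hz
      rwa [Walk.support_reverse, List.mem_reverse] at this
    have hwcase : w ∈ (↑(insert y S₀) : Set V) ∨ w = x := by
      rcases hwZ with hw | hw
      · exact Or.inl (hsuby hw)
      · simp only [Set.mem_insert_iff, Set.mem_singleton_iff] at hw
        rcases hw with rfl | rfl
        · exact Or.inr rfl
        · exact Or.inl (by simp)
    rcases hwcase with hw | heq
    · refine ⟨w, hw, v, hv, q'.reverse, ?_⟩
      intro z hz
      rw [Walk.support_reverse, List.mem_reverse, hq'] at hz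
      exact hp z (hsupp z hz)
    · exfalso
      apply hxY'
      have hwB : w ∈ sideB G' B ↑S₀ := by
        refine ⟨v, hv, q'.reverse, ?_⟩
        intro z hz
        rw [Walk.support_reverse, List.mem_reverse, hq'] at hz
        by_cases hzw : z = w
        · subst hzw
          rw [heq]
          exact fun h => hxS₀ (by exact_mod_cast h)
        · exact fun h => (hq2 z hz hzw).1 (Set.mem_union_left _ h)
      rwa [heq] at hwB
  obtain ⟨CP, hCP, hCPd⟩ := ih G' A ↑(insert x S₀) hcard claimP
  obtain ⟨CQ, hCQ, hCQd⟩ := ih G' ↑(insert y S₀) B hcard claimQ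
  have hPdata : ∀ i : Fin k, ∃ (u w : V) (D : Set V),
      D ⊆ CP i ∧ u ∈ D ∧ u ∈ A ∧ w ∈ D ∧ w ∈ insert x S₀ ∧
      (∀ v ∈ D, v ≠ w → v ∉ (↑(insert x S₀) : Set V) ∧
        ∃ a ∈ A, ∃ r : G'.Walk a v, ∀ z ∈ r.support, z ∉ (↑(insert x S₀) : Set V)) ∧
      (∀ v ∈ D, WalkIn G' D v w) := by
    intro i
    obtain ⟨⟨u, huC, huA⟩, ⟨t, htC, htT⟩, hwalk⟩ := hCP i
    obtain ⟨p, hp⟩ := hwalk u huC t htC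
    have hhit : ∃ w ∈ p.support, w ∈ (↑(insert x S₀) : Set V) := ⟨t, p.end_mem_support, htT⟩
    obtain ⟨w, hwZ, q, hq1, hq2⟩ := exists_first_hit _ p hhit
    refine ⟨u, w, {v | v ∈ q.support}, ?_, q.start_mem_support, huA, q.end_mem_support,
      by exact_mod_cast hwZ, ?_, ?_⟩
    · intro v hv; exact hp v (hq1 v hv)
    · intro v hv hvw
      obtain ⟨h1, r, hr1, hr2⟩ := hq2 v hv hvw
      exact ⟨h1, u, huA, r, hr2⟩
    · intro v hv
      have h1 : WalkIn G' {v' | v' ∈ q.support} u v :=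
        ⟨q.takeUntil v hv, fun z hz => Walk.support_takeUntil_subset _ _ hz⟩
      have h2 : WalkIn G' {v' | v' ∈ q.support} u w := ⟨q, fun z hz => hz⟩
      exact h1.symm.trans h2
  choose uP wP PS hPSsub huPS huPA hwPS hwPT hPX hPconn using hPdata
  have hQdata : ∀ j : Fin k, ∃ (v z : V) (E : Set V),
      E ⊆ CQ j ∧ v ∈ E ∧ v ∈ B ∧ z ∈ E ∧ z ∈ insert y S₀ ∧
      (∀ w' ∈ E, w' ≠ z → w' ∉ (↑(insert y S₀) : Set V) ∧
        ∃ b ∈ B, ∃ r : G'.Walk w' b, ∀ z' ∈ r.support, z' ∉ (↑(insert y S₀) : Set V)) ∧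
      (∀ w' ∈ E, WalkIn G' E z w') := by
    intro j
    obtain ⟨⟨t, htC, htT⟩, ⟨v, hvC, hvB⟩, hwalk⟩ := hCQ j
    obtain ⟨p, hp⟩ := hwalk v hvC t htC
    have hhit : ∃ w ∈ p.support, w ∈ (↑(insert y S₀) : Set V) := ⟨t, p.end_mem_support, htT⟩
    obtain ⟨z, hzZ, q, hq1, hq2⟩ := exists_first_hit _ p hhit
    refine ⟨v, z, {v' | v' ∈ q.support}, ?_, q.start_mem_support, hvB, q.end_mem_support,
      by exact_mod_cast hzZ, ?_, ?_⟩
    · intro v' hv'; exact hp v' (hq1 v' hv')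
    · intro w' hw' hwz
      obtain ⟨h1, r, hr1, hr2⟩ := hq2 w' hw' hwz
      refine ⟨h1, v, hvB, r.reverse, ?_⟩
      intro z' hz'
      rw [Walk.support_reverse, List.mem_reverse] at hz'
      exact hr2 z' hz'
    · intro w' hw'
      have h1 : WalkIn G' {v' | v' ∈ q.support} v z := ⟨q, fun z' hz' => hz'⟩
      have h2 : WalkIn G' {v' | v' ∈ q.support} v w' :=
        ⟨q.takeUntil w' hw', fun z' hz' => Walk.support_takeUntil_subset _ _ hz'⟩
      exact h1.symm.trans h2
  choose vQ zQ ES hESsub hvES hvQB hzES hzQT hQY hQconn using hQdata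
  have hwPinj : Function.Injective wP := by
    intro i j hij
    by_contra hne
    exact Set.disjoint_left.mp (hCPd i j hne) (hPSsub i (hwPS i))
      (hPSsub j (hij ▸ hwPS j))
  have hzQinj : Function.Injective zQ := by
    intro i j hij
    by_contra hne
    exact Set.disjoint_left.mp (hCQd i j hne) (hESsub i (hzES i))
      (hESsub j (hij ▸ hzES j))
  have himgQ : Finset.image zQ Finset.univ = insert y S₀ := by
    apply Finset.eq_of_subset_of_card_le
    · intro z hz
      simp only [Finset.mem_image] at hz
      obtain ⟨j, _, rfl⟩ := hz
      exact hzQT j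
    · rw [Finset.card_image_of_injective _ hzQinj, Finset.card_univ, Fintype.card_fin, hTycard]
  have hmT : ∀ t ∈ insert x S₀, (if t = x then y else t) ∈ insert y S₀ := by
    intro t ht
    by_cases htx : t = x
    · simp [htx]
    · rw [if_neg htx]
      rcases Finset.mem_insert.mp ht with h | h
      · exact absurd h htx
      · exact Finset.mem_insert_of_mem h
  have hminj : ∀ t ∈ insert x S₀, ∀ t' ∈ insert x S₀,
      (if t = x then y else t) = (if t' = x then y else t') → t = t' := by
    intro t ht t' ht' h
    by_cases h1 : t = x <;> by_cases h2 : t' = x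
    · rw [h1, h2]
    · rw [if_pos h1, if_neg h2] at h
      rcases Finset.mem_insert.mp ht' with h3 | h3
      · exact absurd h3 h2
      · exact absurd (h ▸ h3) hyS₀
    · rw [if_neg h1, if_pos h2] at h
      rcases Finset.mem_insert.mp ht with h3 | h3
      · exact absurd h3 h1
      · exact absurd (h ▸ h3) hyS₀
    · rwa [if_neg h1, if_neg h2] at h
  have hzsurj : ∀ i, ∃ j, zQ j = (if wP i = x then y else wP i) := by
    intro i
    have hmem : (if wP i = x then y else wP i) ∈ insert y S₀ := hmT _ (hwPT i)
    rw [← himgQ] at hmem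
    simp only [Finset.mem_image] at hmem
    obtain ⟨j, _, hj⟩ := hmem
    exact ⟨j, hj⟩
  choose jf hjf using hzsurj
  have hjfinj : Function.Injective jf := by
    intro i i' h
    have h2 : zQ (jf i) = zQ (jf i') := by rw [h]
    rw [hjf, hjf] at h2
    exact hwPinj (hminj _ (hwPT i) _ (hwPT i') h2)
  refine ⟨fun i => PS i ∪ ES (jf i), ?_, ?_⟩
  · intro i
    have hbridge : WalkIn G (PS i ∪ ES (jf i)) (wP i) (zQ (jf i)) := by
      by_cases hwx : wP i = x
      · have hz : zQ (jf i) = y := by rw [hjf, if_pos hwx]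
        refine WalkIn.of_adj ?_ (Set.mem_union_left _ (hwPS i))
          (Set.mem_union_right _ (hzES (jf i)))
        rw [hwx, hz]
        exact hadj
      · have hz : zQ (jf i) = wP i := by rw [hjf, if_neg hwx]
        rw [hz]
        exact WalkIn.refl (Set.mem_union_left _ (hwPS i))
    have hPconn' : ∀ v ∈ PS i, WalkIn G (PS i ∪ ES (jf i)) v (wP i) :=
      fun v hv => ((hPconn i v hv).mono Set.subset_union_left).monoGraph hG'le
    have hQconn' : ∀ v ∈ ES (jf i), WalkIn G (PS i ∪ ES (jf i)) (zQ (jf i)) v :=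
      fun v hv => ((hQconn (jf i) v hv).mono Set.subset_union_right).monoGraph hG'le
    refine ⟨⟨uP i, Set.mem_union_left _ (huPS i), huPA i⟩,
      ⟨vQ (jf i), Set.mem_union_right _ (hvES (jf i)), hvQB (jf i)⟩, ?_⟩
    intro a ha b hb
    have hout : ∀ c ∈ PS i ∪ ES (jf i), WalkIn G (PS i ∪ ES (jf i)) c (zQ (jf i)) := by
      intro c hc
      rcases hc with hc | hc
      · exact (hPconn' c hc).trans hbridge
      · exact (hQconn' c hc).symm
    exact (hout a ha).trans (hout b hb).symm
  · have key : ∀ i i', i ≠ i' → ∀ v, v ∈ PS i → v ∈ ES (jf i') → False := by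
      intro i i' hne v hvP hvQ
      by_cases hvw : v = wP i <;> by_cases hvz : v = zQ (jf i')
      · have heq : wP i = zQ (jf i') := hvw.symm.trans hvz
        by_cases hwx : wP i = x
        · have hx2 : x ∈ insert y S₀ := by
            rw [← hwx, heq]
            exact hzQT (jf i')
          rcases Finset.mem_insert.mp hx2 with h | h
          · exact hxyne h
          · exact hxS₀ h
        · have hwS : wP i ∈ S₀ := by
            rcases Finset.mem_insert.mp (hwPT i) with h | h
            · exact absurd h hwx
            · exact h
          have h3 : zQ (jf i') = (if wP i' = x then y else wP i') := hjf i'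
          have h4 : (if wP i = x then y else wP i) = wP i := if_neg hwx
          have h5 : (if wP i = x then y else wP i) = (if wP i' = x then y else wP i') := by
            rw [h4, heq, h3]
          exact hne (hwPinj (hminj _ (hwPT i) _ (hwPT i') h5))
      · obtain ⟨hnotT, b, hbB, r, hr⟩ := hQY (jf i') v hvQ hvz
        have hvT : v ∈ insert x S₀ := by rw [hvw]; exact hwPT i
        rcases Finset.mem_insert.mp hvT with hvx | hvS
        · apply hxY'
          rw [← hvx]
          exact ⟨b, hbB, r, fun z hz hzS => hr z hz (hsuby hzS)⟩
        · exact hnotT (hsuby (by exact_mod_cast hvS))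
      · obtain ⟨hnotT, a, haA, r, hr⟩ := hPX i v hvP hvw
        have hvT : v ∈ insert y S₀ := by rw [hvz]; exact hzQT (jf i')
        rcases Finset.mem_insert.mp hvT with hvy | hvS
        · apply hyX
          rw [← hvy]
          exact ⟨a, haA, r, fun z hz hzS => hr z hz (hsubx hzS)⟩
        · exact hnotT (hsubx (by exact_mod_cast hvS))
      · obtain ⟨_, a, haA, r, hr⟩ := hPX i v hvP hvw
        obtain ⟨_, b, hbB, r', hr'⟩ := hQY (jf i') v hvQ hvz
        exact hXY' v ⟨a, haA, r, fun z hz hzS => hr z hz (hsubx hzS)⟩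
          ⟨b, hbB, r', fun z hz hzS => hr' z hz (hsuby hzS)⟩
    intro i i' hne
    rw [Set.disjoint_left]
    intro v hv hv'
    rw [Set.mem_union] at hv hv'
    rcases hv with hv | hv <;> rcases hv' with hv' | hv'
    · exact Set.disjoint_left.mp (hCPd i i' hne) (hPSsub i hv) (hPSsub i' hv')
    · exact key i i' hne v hv hv'
    · exact key i' i (Ne.symm hne) v hv' hv
    · exact Set.disjoint_left.mp (hCQd (jf i) (jf i') (fun h => hne (hjfinj h)))
        (hESsub _ hv) (hESsub _ hv')

theorem fan_menger [Fintype V] :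
    ∀ (n k : ℕ) (G : SimpleGraph V) (A B : Set V), G.edgeSet.ncard ≤ n →
    (∀ S : Finset V, S.card < k → JoinedOff G A B ↑S) →
    ∃ C : Fin k → Set V, (∀ i, IsConnector G A B (C i)) ∧
      ∀ i j, i ≠ j → Disjoint (C i) (C j) := by
  intro n
  induction n with
  | zero =>
    intro k G A B hn hsep
    have hE : G.edgeSet = ∅ := by
      have h0 : G.edgeSet.ncard = 0 := Nat.le_zero.mp hn
      rwa [Set.ncard_eq_zero (Set.toFinite _)] at h0
    exact fan_of_edgeless hE hsep
  | succ n ih =>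
    intro k G A B hn hsep
    by_cases hE : G.edgeSet = ∅
    · exact fan_of_edgeless hE hsep
    · obtain ⟨e, he⟩ := Set.nonempty_iff_ne_empty.mpr hE
      induction e using Sym2.ind with
      | _ x y =>
      have hadj : G.Adj x y := G.mem_edgeSet.mp he
      have hxyne : x ≠ y := hadj.ne
      have hcard : (G.deleteEdges {s(x,y)}).edgeSet.ncard ≤ n := by
        rw [edgeSet_deleteEdges]
        have h1 : (G.edgeSet \ {s(x,y)}).ncard = G.edgeSet.ncard - 1 :=
          Set.ncard_diff_singleton_of_mem he
        omega
      by_cases hsep' : ∀ S : Finset V, S.card < k → JoinedOff (G.deleteEdges {s(x,y)}) A B ↑S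
      · obtain ⟨C, hC, hdisj⟩ := ih k (G.deleteEdges {s(x,y)}) A B hcard hsep'
        exact ⟨C, fun i => (hC i).monoGraph (G.deleteEdges_le _), hdisj⟩
      · push_neg at hsep'
        obtain ⟨S₀, hS₀k, hnj⟩ := hsep'
        obtain ⟨u0, hu0, v0, hv0, p0, hp0⟩ := hsep S₀ hS₀k
        have hhitxy : ∃ w ∈ p0.support, w ∈ ({x, y} : Set V) := by
          by_contra hno
          push_neg at hno
          obtain ⟨q, hq⟩ := walk_toDeleteEdge p0 (Or.inl (fun hxs => hno x hxs (by simp)))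
          exact hnj ⟨u0, hu0, v0, hv0, q, by rw [hq]; exact hp0⟩
        obtain ⟨w, hwZ, q, hq1, hq2⟩ := exists_first_hit {x, y} p0 hhitxy
        simp only [Set.mem_insert_iff, Set.mem_singleton_iff] at hwZ
        have hqfree : x ∉ q.support ∨ y ∉ q.support := by
          rcases hwZ with rfl | rfl
          · right
            intro hyq
            exact (hq2 y hyq (Ne.symm hxyne)).1 (by simp)
          · left
            intro hxq
            exact (hq2 x hxq hxyne).1 (by simp)
        obtain ⟨q', hq'⟩ := walk_toDeleteEdge q hqfree
        have hwX : w ∈ sideA (G.deleteEdges {s(x,y)}) A ↑S₀ :=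
          ⟨u0, hu0, q', by rw [hq']; intro z hz; exact hp0 z (hq1 z hz)⟩
        have hnotboth : ¬ (x ∈ sideA (G.deleteEdges {s(x,y)}) A ↑S₀ ∧
            y ∈ sideA (G.deleteEdges {s(x,y)}) A ↑S₀) := by
          rintro ⟨hx, hy⟩
          have hu0side : u0 ∈ sideA (G.deleteEdges {s(x,y)}) A ↑S₀ :=
            ⟨u0, hu0, Walk.nil, by
              intro z hz
              simp only [Walk.support_nil, List.mem_singleton] at hz
              subst hz
              exact hp0 z p0.start_mem_support⟩
          obtain ⟨a, ha, r, hr⟩ := sideA_propagate hx hy p0 hu0side hp0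
          exact hnj ⟨a, ha, v0, hv0, r, hr⟩
        rcases hwZ with heq | heq
        · subst heq
          exact fan_step (ih k) hadj hcard hsep S₀ hS₀k hnj hwX (fun hy => hnotboth ⟨hwX, hy⟩)
        · rw [heq] at hwX
          have hswap : s(x, y) = s(y, x) := Sym2.eq_swap.symm
          rw [hswap] at hcard hnj hwX hnotboth
          exact fan_step (ih k) hadj.symm hcard hsep S₀ hS₀k hnj hwX
            (fun hx => hnotboth ⟨hx, hwX⟩)

lemma K24_adj_cases (w₁ w₂ : Fin 2 ⊕ Fin 4) (h : K24.Adj w₁ w₂) :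
    (∃ i j, w₁ = Sum.inl i ∧ w₂ = Sum.inr j) ∨ (∃ j i, w₁ = Sum.inr j ∧ w₂ = Sum.inl i) := by
  cases w₁ with
  | inl i =>
    cases w₂ with
    | inl i' => simp [K24, completeBipartiteGraph] at h
    | inr j => exact Or.inl ⟨i, j, rfl, rfl⟩
  | inr j =>
    cases w₂ with
    | inl i' => exact Or.inr ⟨j, i', rfl, rfl⟩
    | inr j' => simp [K24, completeBipartiteGraph] at h


end MengerDevelopment

/-- every 4-connected graph on at least six vertices has a
`K_{2,4}` minor. -/

theorem fourConnected_hasK24Minor {V : Type*} [Fintype V] (G : SimpleGraph V)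
    (hcard : 6 ≤ Fintype.card V) (hG : KConnected 4 G) : IsMinor K24 G := by
  classical
  by_cases hcomp : ∀ u v : V, u ≠ v → G.Adj u v
  · -- complete graph case
    obtain ⟨f⟩ := Function.Embedding.nonempty_of_card_le (by rwa [Fintype.card_fin])
      (α := Fin 6) (β := V)
    set g : Fin 2 ⊕ Fin 4 → Fin 6 := fun w => match w with
      | Sum.inl i => ⟨i.val, by omega⟩
      | Sum.inr j => ⟨j.val + 2, by omega⟩ with hg
    have hginj : Function.Injective g := by
      intro w₁ w₂ h
      cases w₁ <;> cases w₂ <;> simp only [hg, Fin.mk.injEq] at h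
      · rename_i i i'; exact congrArg _ (Fin.ext h)
      · rename_i i j; exact absurd h (by omega)
      · rename_i j i; exact absurd h (by omega)
      · rename_i j j'; exact congrArg _ (Fin.ext (by omega))
    refine ⟨fun w => {f (g w)}, fun w => singleton_induce_connected G _, ?_, ?_⟩
    · intro w₁ w₂ hne
      rw [Set.disjoint_singleton_left, Set.mem_singleton_iff]
      exact fun h => hne (hginj (f.injective h))
    · intro w₁ w₂ hadj
      refine ⟨f (g w₁), rfl, f (g w₂), rfl, hcomp _ _ ?_⟩
      intro h
      have hww := hginj (f.injective h)
      rw [hww] at hadj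
      exact K24.irrefl hadj
  · push_neg at hcomp
    obtain ⟨a, b, hab_ne, hab_nadj⟩ := hcomp
    have hGable : G.deleteEdges {e : Sym2 V | a ∈ e ∨ b ∈ e} ≤ G := G.deleteEdges_le _
    have hGabAdj : ∀ u z : V, (G.deleteEdges {e : Sym2 V | a ∈ e ∨ b ∈ e}).Adj u z →
        u ≠ a ∧ u ≠ b := by
      intro u z h
      rw [SimpleGraph.deleteEdges_adj] at h
      constructor
      · rintro rfl; exact h.2 (Or.inl (Sym2.mem_mk_left _ _))
      · rintro rfl; exact h.2 (Or.inr (Sym2.mem_mk_left _ _))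
    have hsep : ∀ S : Finset V, S.card < 4 →
        JoinedOff (G.deleteEdges {e : Sym2 V | a ∈ e ∨ b ∈ e})
          (G.neighborSet a) (G.neighborSet b) ↑S := by
      intro S hS
      have hS'card : ((↑S : Set V) \ {a, b}).ncard < 4 := by
        have h1 : ((↑S : Set V) \ {a, b}).ncard ≤ (↑S : Set V).ncard :=
          Set.ncard_le_ncard Set.diff_subset (Set.toFinite _)
        rw [Set.ncard_coe_finset] at h1
        omega
      have hconn := hG.2 _ hS'card
      have haS : a ∈ ((↑S : Set V) \ {a, b})ᶜ := by simp
      have hbS : b ∈ ((↑S : Set V) \ {a, b})ᶜ := by simp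
      obtain ⟨p, hp⟩ := walk_of_induce_reachable haS hbS (hconn.preconnected ⟨a, haS⟩ ⟨b, hbS⟩)
      obtain ⟨u, w, hau, hwb, q, hqsub, haq, hbq⟩ :=
        strip_path p.bypass p.bypass_isPath hab_ne hab_nadj
      have hqS' : ∀ z ∈ q.support, z ∈ ((↑S : Set V) \ {a, b})ᶜ :=
        fun z hz => hp z (p.support_bypass_subset (hqsub z hz))
      have hefree : ∀ e ∈ q.edges, e ∉ {e : Sym2 V | a ∈ e ∨ b ∈ e} := by
        intro e he
        induction e using Sym2.ind with
        | _ c d =>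
        intro hbad
        rcases hbad with hmem | hmem <;> rw [Sym2.mem_iff] at hmem <;> rcases hmem with rfl | rfl
        · exact haq (q.fst_mem_support_of_mem_edges he)
        · exact haq (q.snd_mem_support_of_mem_edges he)
        · exact hbq (q.fst_mem_support_of_mem_edges he)
        · exact hbq (q.snd_mem_support_of_mem_edges he)
      refine ⟨u, hau, w, hwb.symm, q.toDeleteEdges _ hefree, ?_⟩
      intro z hz
      rw [SimpleGraph.Walk.support_transfer] at hz
      intro hzS
      have h1 := hqS' z hz
      rw [Set.mem_compl_iff, Set.mem_diff] at h1
      push_neg at h1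
      have hzab : z ∈ ({a, b} : Set V) := h1 (by exact_mod_cast hzS)
      rcases hzab with rfl | hzb
      · exact haq hz
      · rw [Set.mem_singleton_iff] at hzb
        subst hzb
        exact hbq hz
    obtain ⟨C, hC, hCd⟩ := fan_menger ((G.deleteEdges {e : Sym2 V | a ∈ e ∨ b ∈ e}).edgeSet.ncard)
      4 _ _ _ le_rfl hsep
    have habnotin : ∀ i, a ∉ C i ∧ b ∉ C i := by
      intro i
      obtain ⟨⟨u, huC, huA⟩, _, hwalk⟩ := hC i
      constructor
      · intro hmem
        obtain ⟨p, hp⟩ := hwalk a hmem u huC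
        have hua : a = u := by
          cases p with
          | nil => rfl
          | cons h _ => exact absurd rfl (hGabAdj _ _ h).1
        rw [← hua] at huA
        exact G.irrefl huA
      · intro hmem
        obtain ⟨p, hp⟩ := hwalk b hmem u huC
        have hub : b = u := by
          cases p with
          | nil => rfl
          | cons h _ => exact absurd rfl (hGabAdj _ _ h).2
        rw [← hub] at huA
        exact hab_nadj huA
    refine ⟨Sum.elim (fun i => if i.val = 0 then {a} else {b}) (fun j => C j), ?_, ?_, ?_⟩
    · intro w
      cases w with
      | inl i =>
        by_cases h : i.val = 0 <;> simp only [Sum.elim_inl, h, if_pos, if_neg] <;>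
          first
            | exact singleton_induce_connected G _
            | (rw [if_neg h]; exact singleton_induce_connected G _)
            | (rw [if_pos h]; exact singleton_induce_connected G _)
      | inr j =>
        obtain ⟨⟨u, huC, _⟩, _, hwalk⟩ := hC j
        exact connected_induce_of_walkIn ⟨u, huC⟩
          (fun x hx y hy => (hwalk x hx y hy).monoGraph hGable)
    · intro w₁ w₂ hne
      have hsd : ∀ (i : Fin 2) (j : Fin 4),
          Disjoint (if i.val = 0 then ({a} : Set V) else {b}) (C j) := by
        intro i j
        by_cases h : i.val = 0 <;> [rw [if_pos h]; rw [if_neg h]] <;>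
          rw [Set.disjoint_singleton_left] <;>
          [exact (habnotin j).1; exact (habnotin j).2]
      cases w₁ with
      | inl i =>
        cases w₂ with
        | inl i' =>
          have hii : i ≠ i' := fun h => hne (by rw [h])
          have hv : i.val ≠ i'.val := fun h => hii (Fin.ext h)
          have h2 : (i.val = 0 ∧ i'.val = 1) ∨ (i.val = 1 ∧ i'.val = 0) := by omega
          simp only [Sum.elim_inl]
          rcases h2 with ⟨h3, h4⟩ | ⟨h3, h4⟩ <;> rw [h3, h4] <;> simp <;>
            [exact hab_ne; exact hab_ne.symm]
        | inr j => exact hsd i j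
      | inr j =>
        cases w₂ with
        | inl i => exact (hsd i j).symm
        | inr j' =>
          have hjj : j ≠ j' := fun h => hne (by rw [h])
          exact hCd j j' hjj
    · intro w₁ w₂ hadj
      have hedge : ∀ (i : Fin 2) (j : Fin 4), ∃ v₁ ∈ (if i.val = 0 then ({a} : Set V) else {b}),
          ∃ v₂ ∈ C j, G.Adj v₁ v₂ := by
        intro i j
        obtain ⟨⟨u, huC, huA⟩, ⟨u', huC', huB⟩, _⟩ := hC j
        by_cases h : i.val = 0
        · rw [if_pos h]
          exact ⟨a, rfl, u, huC, huA⟩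
        · rw [if_neg h]
          exact ⟨b, rfl, u', huC', huB⟩
      rcases K24_adj_cases w₁ w₂ hadj with ⟨i, j, rfl, rfl⟩ | ⟨j, i, rfl, rfl⟩
      · exact hedge i j
      · obtain ⟨v₁, hv₁, v₂, hv₂, hvadj⟩ := hedge i j
        exact ⟨v₂, hv₂, v₁, hv₁, hvadj.symm⟩


end K24Paper
end

section
/- Suppose (H, J) is a 2-separation of a graph G with V(H) ∩ V(J) = {x, y}, and suppose G contains a standard K_{2,t} minor (R_1, R_2; S) with t ≥ 3. Then at least one of the following holds: (i) H + xy has a K_{2,t} minor; (ii) J + xy has a K_{2,t} minor; (iii) x ∈ R_1 and y ∈ R_2, or x ∈ R_2 and y ∈ R_1. -/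
namespace K24Paper

open SimpleGraph

lemma walk_reach {V : Type*} {G J' : SimpleGraph V} {Q : Set V} {x y : V} {C : Set V}
    (q1 : ∀ u v, G.Adj u v → u ∈ Q → v ∈ Q ∪ {x, y})
    (q2 : ∀ u v, G.Adj u v → u ∈ Q → J'.Adj u v)
    (qxy : J'.Adj x y) (hxC : x ∈ C) :
    ∀ (v x' : V) (p : G.Walk v x') (hx' : x' = x) (hvC : v ∈ C) (hv : v ∈ Q ∪ {x, y})
      (hsup : ∀ z ∈ p.support, z ∈ C),
      (J'.induce (C ∩ (Q ∪ {x, y}))).Reachable ⟨v, hvC, hv⟩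
        ⟨x, hxC, Set.mem_union_right _ (by simp)⟩ := by
  intro v x' p
  induction p with
  | nil =>
    intro hx' hvC hv _
    subst hx'
    exact Reachable.refl _
  | @cons v u _ h q ih =>
    intro hx' hvC hv hsup
    have huC : u ∈ C := hsup u (by simp [Walk.support_cons, q.start_mem_support])
    have hsup' : ∀ z ∈ q.support, z ∈ C := fun z hz =>
      hsup z (by simp [Walk.support_cons, hz])
    rcases hv with hvQ | hvxy
    · have hu : u ∈ Q ∪ {x, y} := q1 v u h hvQ
      have hJ : J'.Adj v u := q2 v u h hvQ
      have hadj : (J'.induce (C ∩ (Q ∪ {x, y}))).Adj ⟨v, hvC, Or.inl hvQ⟩ ⟨u, huC, hu⟩ := hJ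
      exact hadj.reachable.trans (ih hx' huC hu hsup')
    · rcases hvxy with hvx | hvy
      · subst hvx; exact Reachable.refl _
      · have hJvx : J'.Adj v x := by rw [hvy]; exact qxy.symm
        have hadj : (J'.induce (C ∩ (Q ∪ {x, y}))).Adj
            ⟨v, hvC, Or.inr (by simp [hvy])⟩ ⟨x, hxC, Or.inr (by simp)⟩ := hJvx
        exact hadj.reachable

lemma walk_stay {V : Type*} {G : SimpleGraph V} {Q : Set V} {x y : V} {C : Set V}
    (q1 : ∀ u v, G.Adj u v → u ∈ Q → v ∈ Q ∪ {x, y})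
    (hxC : x ∉ C) (hyC : y ∉ C) :
    ∀ (u w : V) (p : G.Walk u w), (∀ z ∈ p.support, z ∈ C) → u ∈ Q → w ∈ Q := by
  intro u w p
  induction p with
  | nil => exact fun _ hu => hu
  | @cons a b _ h q ih =>
    intro hsup ha
    have hb : b ∈ Q ∪ {x, y} := q1 a b h ha
    have hbC : b ∈ C := hsup b (by simp [Walk.support_cons, q.start_mem_support])
    have hbQ : b ∈ Q := by
      rcases hb with hb | hb
      · exact hb
      · rcases hb with rfl | rfl
        · exact absurd hbC hxC
        · exact absurd hbC hyC
    exact ih (fun z hz => hsup z (by simp [Walk.support_cons, hz])) hbQ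

/-- Extract a walk in `G` with support in `C` from reachability in `G.induce C`. -/
lemma walk_of_induce {V : Type*} {G : SimpleGraph V} {C : Set V} {a b : C}
    (h : (G.induce C).Reachable a b) :
    ∃ p : G.Walk (a : V) (b : V), ∀ z ∈ p.support, z ∈ C := by
  obtain ⟨p⟩ := h
  refine ⟨p.map (SimpleGraph.Embedding.induce C).toHom, ?_⟩
  intro z hz
  change z ∈ (p.map (SimpleGraph.Embedding.induce C).toHom).support at hz
  rw [Walk.support_map, List.mem_map] at hz
  obtain ⟨w, _, rfl⟩ := hz
  exact w.2


lemma induce_singleton_connected {V : Type*} (G : SimpleGraph V) (v : V) :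
    (G.induce {v}).Connected := by
  haveI : Nonempty ({v} : Set V) := ⟨⟨v, rfl⟩⟩
  refine ⟨fun a b => ?_⟩
  have : a = b := by
    apply Subtype.ext
    have ha : (a : V) ∈ ({v} : Set V) := a.2
    have hb : (b : V) ∈ ({v} : Set V) := b.2
    simp only [Set.mem_singleton_iff] at ha hb
    rw [ha, hb]
  exact this ▸ Reachable.refl _

lemma induce_connected_mono {V : Type*} {G G' : SimpleGraph V} {C : Set V}
    (h : ∀ u v : V, u ∈ C → v ∈ C → G.Adj u v → G'.Adj u v)
    (hc : (G.induce C).Connected) : (G'.induce C).Connected :=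
  hc.mono (fun a b hab => h a b a.2 b.2 hab)

lemma std_symm {V : Type*} {G : SimpleGraph V} {t : ℕ} {R₁ R₂ S : Set V}
    (h : StdK2tMinor G t R₁ R₂ S) : StdK2tMinor G t R₂ R₁ S := by
  obtain ⟨h1, h2, h3, h4, h5, h6, h7⟩ := h
  exact ⟨h1.symm, Set.union_comm R₁ R₂ ▸ h2, h4, h3, h5, h6,
    fun v hv => ⟨(h7 v hv).2, (h7 v hv).1⟩⟩

lemma addEdge_comm {U : Type*} (G : SimpleGraph U) (x y : U) :
    AddEdge G x y = AddEdge G y x := by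
  ext a b
  simp only [AddEdge, sup_adj, fromRel_adj]
  tauto

lemma std_to_minor {V : Type*} {G : SimpleGraph V} {t : ℕ} {R₁ R₂ S : Set V}
    (h : StdK2tMinor G t R₁ R₂ S) :
    IsMinor (completeBipartiteGraph (Fin 2) (Fin t)) G := by
  classical
  obtain ⟨hd12, hdS, hc1, hc2, hfin, hcard, hadj⟩ := h
  haveI := hfin.fintype
  have hcardt : Fintype.card S = t := by
    rw [← Nat.card_eq_fintype_card, Nat.card_coe_set_eq, hcard]
  let e : Fin t ≃ S := (Fintype.equivFinOfCardEq hcardt).symm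
  refine ⟨Sum.elim (fun i : Fin 2 => if i = 0 then R₁ else R₂)
    (fun j : Fin t => {(e j : V)}), ?_, ?_, ?_⟩
  · rintro (i | j) <;> simp only [Sum.elim_inl, Sum.elim_inr]
    · by_cases hi : i = 0
      · rw [if_pos hi]; exact hc1
      · rw [if_neg hi]; exact hc2
    · exact induce_singleton_connected G _
  · have hSR : ∀ (j : Fin t) (i : Fin 2),
        Disjoint ({(e j : V)} : Set V) (if i = 0 then R₁ else R₂) := by
      intro j i
      have hj : (e j : V) ∈ S := (e j).2
      have : (e j : V) ∉ R₁ ∪ R₂ := fun hmem => hdS.ne_of_mem hmem hj rfl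
      by_cases hi : i = 0 <;> simp_all [Set.disjoint_singleton_left]
    rintro (i₁ | j₁) (i₂ | j₂) hne <;>
      simp only [Sum.elim_inl, Sum.elim_inr]
    · have hi : i₁ ≠ i₂ := fun h => hne (by rw [h])
      fin_cases i₁ <;> fin_cases i₂ <;> simp_all [hd12, hd12.symm]
    · exact (hSR j₂ i₁).symm
    · exact hSR j₁ i₂
    · have hj : j₁ ≠ j₂ := fun h => hne (by rw [h])
      have : (e j₁ : V) ≠ (e j₂ : V) := fun h =>
        hj (e.injective (Subtype.ext h))
      simp [Set.disjoint_singleton_left, this]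
  · rintro (i₁ | j₁) (i₂ | j₂) hadj' <;>
      simp only [Sum.elim_inl, Sum.elim_inr] <;>
      simp only [completeBipartiteGraph_adj, Sum.isLeft_inl, Sum.isRight_inl,
        Sum.isLeft_inr, Sum.isRight_inr] at hadj'
    · simp at hadj'
    · -- inl i₁, inr j₂
      have hs := hadj (e j₂) (e j₂).2
      by_cases hi : i₁ = 0
      · obtain ⟨w, hw, hGw⟩ := hs.1
        exact ⟨w, by simp [hi, hw], (e j₂ : V), rfl, hGw.symm⟩
      · obtain ⟨w, hw, hGw⟩ := hs.2
        exact ⟨w, by simp [hi, hw], (e j₂ : V), rfl, hGw.symm⟩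
    · -- inr j₁, inl i₂
      have hs := hadj (e j₁) (e j₁).2
      by_cases hi : i₂ = 0
      · obtain ⟨w, hw, hGw⟩ := hs.1
        exact ⟨(e j₁ : V), rfl, w, by simp [hi, hw], hGw⟩
      · obtain ⟨w, hw, hGw⟩ := hs.2
        exact ⟨(e j₁ : V), rfl, w, by simp [hi, hw], hGw⟩
    · simp at hadj'

lemma master {V : Type*} {G J' : SimpleGraph V} {Q : Set V} {x y : V} {t : ℕ}
    {R₁ R₂ S : Set V}
    (q1 : ∀ u v, G.Adj u v → u ∈ Q → v ∈ Q ∪ {x, y})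
    (q2 : ∀ u v, G.Adj u v → u ∈ Q → J'.Adj u v)
    (qxy : J'.Adj x y)
    (hstd : StdK2tMinor G t R₁ R₂ S)
    (hR2 : R₂ ⊆ Q)
    (hR1 : R₁ ⊆ Q ∨ x ∈ R₁) :
    StdK2tMinor J' t (R₁ ∩ (Q ∪ {x, y})) R₂ S := by
  obtain ⟨hd12, hdS, hc1, hc2, hfin, hcard, hadj⟩ := hstd
  have hR1sub : R₁ ∩ (Q ∪ {x, y}) ⊆ R₁ := Set.inter_subset_left
  refine ⟨hd12.mono_left hR1sub, hdS.mono_left (Set.union_subset_union_left _ hR1sub),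
    ?_, ?_, hfin, hcard, ?_⟩
  · -- connectivity of R₁'
    rcases hR1 with hR1Q | hxR1
    · have heq : R₁ ∩ (Q ∪ {x, y}) = R₁ := by
        apply Set.inter_eq_self_of_subset_left
        exact fun v hv => Or.inl (hR1Q hv)
      rw [heq]
      exact induce_connected_mono (fun u v hu hv hG => q2 u v hG (hR1Q hu)) hc1
    · have hreach : ∀ (a : (R₁ ∩ (Q ∪ {x, y}) : Set V)),
          (J'.induce (R₁ ∩ (Q ∪ {x, y}))).Reachable a
            ⟨x, hxR1, Set.mem_union_right _ (by simp)⟩ := by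
        rintro ⟨v, hvR, hvQ⟩
        have hr : (G.induce R₁).Reachable ⟨v, hvR⟩ ⟨x, hxR1⟩ := hc1.preconnected _ _
        obtain ⟨p, hp⟩ := walk_of_induce hr
        exact walk_reach q1 q2 qxy hxR1 v x p rfl hvR hvQ hp
      haveI : Nonempty (R₁ ∩ (Q ∪ {x, y}) : Set V) :=
        ⟨⟨x, hxR1, Set.mem_union_right _ (by simp)⟩⟩
      exact ⟨fun a b => (hreach a).trans (hreach b).symm⟩
  · exact induce_connected_mono (fun u v hu hv hG => q2 u v hG (hR2 hu)) hc2
  · intro s hs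
    obtain ⟨⟨w1, hw1, hGw1⟩, ⟨w2, hw2, hGw2⟩⟩ := hadj s hs
    have hsQxy : s ∈ Q ∪ {x, y} := q1 w2 s hGw2.symm (hR2 hw2)
    constructor
    · -- neighbor in R₁'
      rcases hsQxy with hsQ | hsxy
      · have hw1m : w1 ∈ Q ∪ {x, y} := q1 s w1 hGw1 hsQ
        exact ⟨w1, ⟨hw1, hw1m⟩, q2 s w1 hGw1 hsQ⟩
      · rcases hR1 with hR1Q | hxR1
        · exact ⟨w1, ⟨hw1, Or.inl (hR1Q hw1)⟩, (q2 w1 s hGw1.symm (hR1Q hw1)).symm⟩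
        · -- x ∈ R₁; s ∈ {x,y}; if s = x then s ∈ R₁ ∩ S contradiction; so s = y
          rcases hsxy with hsx | hsy
          · exact absurd hs (fun hsS =>
              hdS.ne_of_mem (Or.inl hxR1) hsS hsx.symm)
          · refine ⟨x, ⟨hxR1, Set.mem_union_right _ (by simp)⟩, ?_⟩
            rw [hsy]; exact qxy.symm
    · exact ⟨w2, hw2, (q2 w2 s hGw2.symm (hR2 hw2)).symm⟩


/-- Lemma 14: if `(H, J)` is a 2-separation of `G` with
`V(H) ∩ V(J) = {x, y}` and `G` has a standard `K_{2,t}` minor `(R₁, R₂; S)` with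
`t ≥ 3`, then `H + xy` has a `K_{2,t}` minor, or `J + xy` has a `K_{2,t}` minor, or
`x ∈ R₁` and `y ∈ R₂` (or vice versa). -/
theorem two_separation_K2t {V : Type*} (G : SimpleGraph V) (H J : G.Subgraph)
    (hunion : H ⊔ J = ⊤) (hedisj : Disjoint H.edgeSet J.edgeSet)
    (x y : V) (hxy : x ≠ y) (hcut : H.verts ∩ J.verts = {x, y})
    (hHne : (H.verts \ J.verts).Nonempty) (hJne : (J.verts \ H.verts).Nonempty)
    (t : ℕ) (ht : 3 ≤ t) (R₁ R₂ S : Set V) (hstd : StdK2tMinor G t R₁ R₂ S) :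
    IsMinor (completeBipartiteGraph (Fin 2) (Fin t)) (AddEdge H.spanningCoe x y) ∨
    IsMinor (completeBipartiteGraph (Fin 2) (Fin t)) (AddEdge J.spanningCoe x y) ∨
    ((x ∈ R₁ ∧ y ∈ R₂) ∨ (x ∈ R₂ ∧ y ∈ R₁)) := by
  classical
  by_cases hiii : (x ∈ R₁ ∧ y ∈ R₂) ∨ (x ∈ R₂ ∧ y ∈ R₁)
  · exact Or.inr (Or.inr hiii)
  have hd12 : Disjoint R₁ R₂ := hstd.1
  have hc1 : (G.induce R₁).Connected := hstd.2.2.1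
  have hc2 : (G.induce R₂).Connected := hstd.2.2.2.1
  have hcard : S.ncard = t := hstd.2.2.2.2.2.1
  have hadjS := hstd.2.2.2.2.2.2
  set A : Set V := H.verts \ J.verts with hAdef
  set B : Set V := J.verts \ H.verts with hBdef
  have hcov : ∀ v : V, v ∈ H.verts ∪ J.verts := by
    have hvu : H.verts ∪ J.verts = Set.univ := by
      rw [← Subgraph.verts_sup, hunion, Subgraph.verts_top]
    intro v; rw [hvu]; trivial
  have hGadj : ∀ u v, G.Adj u v → H.Adj u v ∨ J.Adj u v := by
    intro u v h
    have h2 : (H ⊔ J).Adj u v := by rw [hunion]; exact Subgraph.top_adj.mpr h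
    exact Subgraph.sup_adj.mp h2
  have hJedge : ∀ u v, G.Adj u v → u ∉ H.verts → J.Adj u v := by
    intro u v h hu
    rcases hGadj u v h with hH | hJ
    · exact absurd hH.fst_mem hu
    · exact hJ
  have hHedge : ∀ u v, G.Adj u v → u ∉ J.verts → H.Adj u v := by
    intro u v h hu
    rcases hGadj u v h with hH | hJ
    · exact hH
    · exact absurd hJ.fst_mem hu
  have qB1 : ∀ u v, G.Adj u v → u ∈ B → v ∈ B ∪ {x, y} := by
    intro u v h hu
    have hJ : J.Adj u v := hJedge u v h hu.2
    have hv : v ∈ J.verts := hJ.snd_mem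
    by_cases hvH : v ∈ H.verts
    · right
      have hvm : v ∈ H.verts ∩ J.verts := ⟨hvH, hv⟩
      rw [hcut] at hvm; exact hvm
    · exact Or.inl ⟨hv, hvH⟩
  have qA1 : ∀ u v, G.Adj u v → u ∈ A → v ∈ A ∪ {x, y} := by
    intro u v h hu
    have hH : H.Adj u v := hHedge u v h hu.2
    have hv : v ∈ H.verts := hH.snd_mem
    by_cases hvJ : v ∈ J.verts
    · right
      have hvm : v ∈ H.verts ∩ J.verts := ⟨hv, hvJ⟩
      rw [hcut] at hvm; exact hvm
    · exact Or.inl ⟨hv, hvJ⟩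
  have qB2 : ∀ u v, G.Adj u v → u ∈ B → (AddEdge J.spanningCoe x y).Adj u v := by
    intro u v h hu
    have : (J.spanningCoe ⊔ SimpleGraph.fromRel (fun a b => a = x ∧ b = y)).Adj u v :=
      (SimpleGraph.sup_adj _ _ _ _).mpr (Or.inl (hJedge u v h hu.2))
    exact this
  have qA2 : ∀ u v, G.Adj u v → u ∈ A → (AddEdge H.spanningCoe x y).Adj u v := by
    intro u v h hu
    have : (H.spanningCoe ⊔ SimpleGraph.fromRel (fun a b => a = x ∧ b = y)).Adj u v :=
      (SimpleGraph.sup_adj _ _ _ _).mpr (Or.inl (hHedge u v h hu.2))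
    exact this
  have qxyJ : (AddEdge J.spanningCoe x y).Adj x y := by
    have : (J.spanningCoe ⊔ SimpleGraph.fromRel (fun a b => a = x ∧ b = y)).Adj x y :=
      (SimpleGraph.sup_adj _ _ _ _).mpr (Or.inr ((SimpleGraph.fromRel_adj _ _ _).mpr
        ⟨hxy, Or.inl ⟨rfl, rfl⟩⟩))
    exact this
  have qxyH : (AddEdge H.spanningCoe x y).Adj x y := by
    have : (H.spanningCoe ⊔ SimpleGraph.fromRel (fun a b => a = x ∧ b = y)).Adj x y :=
      (SimpleGraph.sup_adj _ _ _ _).mpr (Or.inr ((SimpleGraph.fromRel_adj _ _ _).mpr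
        ⟨hxy, Or.inl ⟨rfl, rfl⟩⟩))
    exact this
  have dich : ∀ C : Set V, (G.induce C).Connected → x ∉ C → y ∉ C →
      C ⊆ A ∨ C ⊆ B := by
    intro C hc hxC hyC
    have hCAB : ∀ v ∈ C, v ∈ A ∪ B := by
      intro v hv
      by_cases vH : v ∈ H.verts
      · by_cases vJ : v ∈ J.verts
        · exfalso
          have hvm : v ∈ H.verts ∩ J.verts := ⟨vH, vJ⟩
          rw [hcut] at hvm
          rcases hvm with rfl | rfl
          · exact hxC hv
          · exact hyC hv
        · exact Or.inl ⟨vH, vJ⟩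
      · rcases hcov v with h | h
        · exact absurd h vH
        · exact Or.inr ⟨h, vH⟩
    by_contra hcon
    push_neg at hcon
    obtain ⟨h1, h2⟩ := hcon
    obtain ⟨a, haC, haA⟩ := Set.not_subset.mp h1
    obtain ⟨b, hbC, hbB⟩ := Set.not_subset.mp h2
    have haB : a ∈ B := ((hCAB a haC).resolve_left haA)
    have hbA : b ∈ A := by
      rcases hCAB b hbC with h | h
      · exact h
      · exact absurd h hbB
    have hr : (G.induce C).Reachable ⟨b, hbC⟩ ⟨a, haC⟩ := hc.preconnected _ _
    obtain ⟨p, hp⟩ := walk_of_induce hr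
    have haA2 : a ∈ A := walk_stay qA1 hxC hyC b a p hp hbA
    exact haA2.2 haB.1
  have finJ : ∀ Ra Rb : Set V, StdK2tMinor G t Ra Rb S →
      Rb ⊆ B → (Ra ⊆ B ∨ x ∈ Ra ∨ y ∈ Ra) →
      IsMinor (completeBipartiteGraph (Fin 2) (Fin t)) (AddEdge J.spanningCoe x y) := by
    intro Ra Rb hstd' hRb hanc
    rcases hanc with h | h | h
    · exact std_to_minor (master qB1 qB2 qxyJ hstd' hRb (Or.inl h))
    · exact std_to_minor (master qB1 qB2 qxyJ hstd' hRb (Or.inr h))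
    · rw [addEdge_comm]
      have q1' : ∀ u v, G.Adj u v → u ∈ B → v ∈ B ∪ {y, x} := by
        intro u v hG hu; rw [Set.pair_comm]; exact qB1 u v hG hu
      have q2' : ∀ u v, G.Adj u v → u ∈ B → (AddEdge J.spanningCoe y x).Adj u v := by
        intro u v hG hu; rw [← addEdge_comm]; exact qB2 u v hG hu
      have qxy' : (AddEdge J.spanningCoe y x).Adj y x := by
        rw [← addEdge_comm]; exact qxyJ.symm
      exact std_to_minor (master q1' q2' qxy' hstd' hRb (Or.inr h))
  have finH : ∀ Ra Rb : Set V, StdK2tMinor G t Ra Rb S →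
      Rb ⊆ A → (Ra ⊆ A ∨ x ∈ Ra ∨ y ∈ Ra) →
      IsMinor (completeBipartiteGraph (Fin 2) (Fin t)) (AddEdge H.spanningCoe x y) := by
    intro Ra Rb hstd' hRb hanc
    rcases hanc with h | h | h
    · exact std_to_minor (master qA1 qA2 qxyH hstd' hRb (Or.inl h))
    · exact std_to_minor (master qA1 qA2 qxyH hstd' hRb (Or.inr h))
    · rw [addEdge_comm]
      have q1' : ∀ u v, G.Adj u v → u ∈ A → v ∈ A ∪ {y, x} := by
        intro u v hG hu; rw [Set.pair_comm]; exact qA1 u v hG hu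
      have q2' : ∀ u v, G.Adj u v → u ∈ A → (AddEdge H.spanningCoe y x).Adj u v := by
        intro u v hG hu; rw [← addEdge_comm]; exact qA2 u v hG hu
      have qxy' : (AddEdge H.spanningCoe y x).Adj y x := by
        rw [← addEdge_comm]; exact qxyH.symm
      exact std_to_minor (master q1' q2' qxy' hstd' hRb (Or.inr h))
  have main : ∀ Ra Rb : Set V, StdK2tMinor G t Ra Rb S → x ∉ Rb → y ∉ Rb →
      (x ∈ Ra ∨ y ∈ Ra) →
      IsMinor (completeBipartiteGraph (Fin 2) (Fin t)) (AddEdge H.spanningCoe x y) ∨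
      IsMinor (completeBipartiteGraph (Fin 2) (Fin t)) (AddEdge J.spanningCoe x y) ∨
      ((x ∈ R₁ ∧ y ∈ R₂) ∨ (x ∈ R₂ ∧ y ∈ R₁)) := by
    intro Ra Rb hstd' hxRb hyRb hanc
    rcases dich Rb hstd'.2.2.2.1 hxRb hyRb with hsub | hsub
    · exact Or.inl (finH Ra Rb hstd' hsub (Or.inr hanc))
    · exact Or.inr (Or.inl (finJ Ra Rb hstd' hsub (Or.inr hanc)))
  have contra : ∀ Ra Rb : Set V, Ra ⊆ A → Rb ⊆ B →
      (∀ s ∈ S, (∃ w ∈ Ra, G.Adj s w) ∧ (∃ w ∈ Rb, G.Adj s w)) → False := by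
    intro Ra Rb hRaA hRbB hadj'
    have hSxy : S ⊆ ({x, y} : Set V) := by
      intro s hs
      obtain ⟨⟨w1, hw1, h1⟩, ⟨w2, hw2, h2⟩⟩ := hadj' s hs
      have hsA : s ∈ A ∪ {x, y} := qA1 w1 s h1.symm (hRaA hw1)
      have hsB : s ∈ B ∪ {x, y} := qB1 w2 s h2.symm (hRbB hw2)
      rcases hsA with hA' | h
      · rcases hsB with hB' | h
        · exact absurd hB'.1 hA'.2
        · exact h
      · exact h
    have ht2 : t ≤ 2 := by
      rw [← hcard]
      calc S.ncard ≤ ({x, y} : Set V).ncard :=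
            Set.ncard_le_ncard hSxy ((Set.finite_singleton y).insert x)
        _ = 2 := Set.ncard_pair hxy
    omega
  by_cases hx1 : x ∈ R₁
  · by_cases hy2 : y ∈ R₂
    · exact Or.inr (Or.inr (Or.inl ⟨hx1, hy2⟩))
    · exact main R₁ R₂ hstd (Set.disjoint_left.mp hd12 hx1) hy2 (Or.inl hx1)
  · by_cases hx2 : x ∈ R₂
    · by_cases hy1 : y ∈ R₁
      · exact Or.inr (Or.inr (Or.inr ⟨hx2, hy1⟩))
      · exact main R₂ R₁ (std_symm hstd) hx1 hy1 (Or.inl hx2)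
    · by_cases hy1 : y ∈ R₁
      · exact main R₁ R₂ hstd hx2 (Set.disjoint_left.mp hd12 hy1) (Or.inr hy1)
      · by_cases hy2 : y ∈ R₂
        · exact main R₂ R₁ (std_symm hstd) hx1 hy1 (Or.inr hy2)
        · rcases dich R₁ hc1 hx1 hy1 with h1 | h1 <;>
            rcases dich R₂ hc2 hx2 hy2 with h2 | h2
          · exact Or.inl (finH R₁ R₂ hstd h2 (Or.inl h1))
          · exact absurd (contra R₁ R₂ h1 h2 hadjS) id
          · exact absurd (contra R₂ R₁ h2 h1
              (fun s hs => ⟨(hadjS s hs).2, (hadjS s hs).1⟩)) id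
          · exact Or.inr (Or.inl (finJ R₁ R₂ hstd h2 (Or.inl h1)))

end K24Paper
end
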